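/- Suppose the splitting condition holds with constants c, N, ε. Then for every integer k ≥ 1 and every r ∈ ℝ, 0 ≤ F_{kN}^{(0)}(r) − F_{kN}^{(1)}(r) ≤ (1 − ε)^k. -/

import Mathlib

open MeasureTheory ProbabilityTheory Set Filter Topology

section Aux

variable {Ω : Type*} [MeasurableSpace Ω] {V : Type*} [MeasurableSpace V]

/-- finite-prefix iteration of the random map -/
def iterB (f : ℝ → V → ℝ) : (t : ℕ) → ℝ → (Fin t → V) → ℝ
  | 0, x, _ => x
  | (t+1), x, w => f (iterB f t x (fun i => w i.castSucc)) (w (Fin.last t))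

lemma iterB_meas (f : ℝ → V → ℝ) (hf : Measurable (Function.uncurry f)) (t : ℕ) :
    Measurable (fun p : ℝ × (Fin t → V) => iterB f t p.1 p.2) := by
  induction t with
  | zero => exact measurable_fst
  | succ t ih =>
    have h1 : Measurable (fun p : ℝ × (Fin (t+1) → V) =>
        (p.1, fun i : Fin t => p.2 i.castSucc)) :=
      measurable_fst.prodMk
        (measurable_pi_lambda _ fun i => (measurable_pi_apply _).comp measurable_snd)
    have h2 : Measurable (fun p : ℝ × (Fin (t+1) → V) => p.2 (Fin.last t)) :=
      (measurable_pi_apply _).comp measurable_snd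
    exact hf.comp ((ih.comp h1).prodMk h2)

lemma X_eq_iterB (f : ℝ → V → ℝ) (ξ : ℕ → Ω → V) (X : ℝ → ℕ → Ω → ℝ)
    (hX0 : ∀ x ω, X x 0 ω = x)
    (hXrec : ∀ x t ω, X x (t + 1) ω = f (X x t ω) (ξ t ω)) :
    ∀ x t ω, X x t ω = iterB f t x (fun i : Fin t => ξ i ω) := by
  intro x t; induction t with
  | zero => intro ω; rw [hX0]; rfl
  | succ t ih =>
    intro ω
    rw [hXrec, ih]
    simp [iterB]

lemma X_shift (f : ℝ → V → ℝ) (ξ : ℕ → Ω → V) (X : ℝ → ℕ → Ω → ℝ)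
    (hXrec : ∀ x t ω, X x (t + 1) ω = f (X x t ω) (ξ t ω)) :
    ∀ x m n ω, X x (m + n) ω = iterB f n (X x m ω) (fun i : Fin n => ξ (m + i) ω) := by
  intro x m n; induction n with
  | zero => intro ω; rfl
  | succ n ih =>
    intro ω
    have : m + (n + 1) = (m + n) + 1 := rfl
    rw [this, hXrec, ih]
    simp [iterB]

lemma map_block_eq_pi (Pr : Measure Ω) [IsProbabilityMeasure Pr]
    (ξ : ℕ → Ω → V) (hξ_meas : ∀ t, Measurable (ξ t))
    (hξ_indep : iIndepFun ξ Pr)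
    (hξ_ident : ∀ t, Measure.map (ξ t) Pr = Measure.map (ξ 0) Pr)
    (m n : ℕ) :
    Pr.map (fun ω (i : Fin n) => ξ (m + i) ω)
      = Measure.pi (fun _ : Fin n => Pr.map (ξ 0)) := by
  haveI : IsProbabilityMeasure (Pr.map (ξ 0)) :=
    Measure.isProbabilityMeasure_map (hξ_meas 0).aemeasurable
  have hT : Measurable (fun ω (i : Fin n) => ξ (m + i) ω) :=
    measurable_pi_lambda _ fun i => hξ_meas (m + i)
  refine Eq.symm (Measure.pi_eq (μ := fun _ : Fin n => Pr.map (ξ 0)) fun s hs => ?_)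
  classical
  set sets : ℕ → Set V := fun j =>
    if h : m ≤ j ∧ j - m < n then s ⟨j - m, h.2⟩ else univ with hsets_def
  have hsets_meas : ∀ j, MeasurableSet (sets j) := by
    intro j; rw [hsets_def]; dsimp only
    split
    · exact hs _
    · exact MeasurableSet.univ
  have key : ∀ i : Fin n, sets (m + i) = s i := by
    intro i
    rw [hsets_def]; dsimp only
    rw [dif_pos ⟨Nat.le_add_right m i, by rw [Nat.add_sub_cancel_left]; exact i.isLt⟩]
    congr 1
    ext
    simp [Nat.add_sub_cancel_left]
  set T : Finset ℕ := Finset.image (fun i : Fin n => m + i.val) Finset.univ with hT_def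
  have hinj : Function.Injective (fun i : Fin n => m + i.val) := by
    intro a b hab
    simp only at hab
    exact Fin.ext (by omega)
  have hpre : (fun ω (i : Fin n) => ξ (m + i) ω) ⁻¹' (univ.pi s)
      = ⋂ j ∈ T, ξ j ⁻¹' sets j := by
    ext ω
    simp only [Set.mem_preimage, Set.mem_pi, Set.mem_univ, true_implies, Set.mem_iInter,
      hT_def, Finset.mem_image, Finset.mem_univ, true_and]
    constructor
    · rintro h j ⟨i, rfl⟩
      rw [key i]; exact h i
    · intro h i
      have := h (m + i) ⟨i, rfl⟩
      rwa [key i] at this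
  rw [Measure.map_apply hT (MeasurableSet.univ_pi hs), hpre,
    hξ_indep.measure_inter_preimage_eq_mul T (fun j _ => hsets_meas j), hT_def,
    Finset.prod_image (fun a _ b _ h => hinj h)]
  refine Finset.prod_congr rfl fun i _ => ?_
  rw [key i, ← Measure.map_apply (hξ_meas (m + i.val)) (hs i), hξ_ident]

end Aux

/-- **geometric bound in the proof of Theorem 1.**
Under the splitting condition with constants `c`, `N`, `ε = min(ε₁,ε₂)`, for every
integer `k ≥ 1` and every `r ∈ ℝ`, `0 ≤ F_{kN}^{(0)}(r) − F_{kN}^{(1)}(r) ≤ (1 − ε)^k`. -/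
theorem stmt3
    {Ω : Type*} [MeasurableSpace Ω] {V : Type*} [MeasurableSpace V]
    (Pr : Measure Ω) [IsProbabilityMeasure Pr]
    (ξ : ℕ → Ω → V) (hξ_meas : ∀ t, Measurable (ξ t))
    (hξ_indep : iIndepFun ξ Pr)
    (hξ_ident : ∀ t, Measure.map (ξ t) Pr = Measure.map (ξ 0) Pr)
    (f : ℝ → V → ℝ) (hf_meas : Measurable (Function.uncurry f))
    (hf_range : ∀ x ∈ Icc (0:ℝ) 1, ∀ v : V, f x v ∈ Icc (0:ℝ) 1)
    (hf_mono : ∀ v : V, ∀ x₁ ∈ Icc (0:ℝ) 1, ∀ x₂ ∈ Icc (0:ℝ) 1, x₁ ≤ x₂ → f x₁ v ≤ f x₂ v)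
    (X : ℝ → ℕ → Ω → ℝ)
    (hX0 : ∀ x ω, X x 0 ω = x)
    (hXrec : ∀ x t ω, X x (t + 1) ω = f (X x t ω) (ξ t ω))
    -- splitting condition
    (c : ℝ) (hc : c ∈ Icc (0:ℝ) 1) (N : ℕ) (hN : 1 ≤ N)
    (hsplit1 : 0 < Pr {ω | X 1 N ω ≤ c})
    (hsplit2 : 0 < Pr {ω | c ≤ X 0 N ω}) :
    ∀ k : ℕ, 1 ≤ k → ∀ r : ℝ,
      0 ≤ (Pr {ω | X 0 (k * N) ω ≤ r}).toReal - (Pr {ω | X 1 (k * N) ω ≤ r}).toReal ∧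
      (Pr {ω | X 0 (k * N) ω ≤ r}).toReal - (Pr {ω | X 1 (k * N) ω ≤ r}).toReal ≤
        (1 - min (Pr {ω | X 1 N ω ≤ c}).toReal (Pr {ω | c ≤ X 0 N ω}).toReal) ^ k := by
  -- basic facts about the process
  have hXB := X_eq_iterB f ξ X hX0 hXrec
  have hXsh := X_shift f ξ X hXrec
  have hXmeas : ∀ x t, Measurable (X x t) := by
    intro x t; induction t with
    | zero =>
      have h : X x 0 = fun _ => x := funext (hX0 x)
      rw [h]; exact measurable_const
    | succ t ih =>
      have h : X x (t+1) = fun ω => Function.uncurry f (X x t ω, ξ t ω) :=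
        funext fun ω => hXrec x t ω
      rw [h]; exact hf_meas.comp (ih.prodMk (hξ_meas t))
  have hmem : ∀ x, x ∈ Icc (0:ℝ) 1 → ∀ t ω, X x t ω ∈ Icc (0:ℝ) 1 := by
    intro x hx t; induction t with
    | zero => intro ω; rw [hX0]; exact hx
    | succ t ih => intro ω; rw [hXrec]; exact hf_range _ (ih ω) _
  have hmono : ∀ a, a ∈ Icc (0:ℝ) 1 → ∀ b, b ∈ Icc (0:ℝ) 1 → a ≤ b →
      ∀ t ω, X a t ω ≤ X b t ω := by
    intro a ha b hb hab t; induction t with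
    | zero => intro ω; rw [hX0, hX0]; exact hab
    | succ t ih =>
      intro ω; rw [hXrec, hXrec]
      exact hf_mono _ _ (hmem a ha t ω) _ (hmem b hb t ω) (ih ω)
  have h01 : (0:ℝ) ∈ Icc (0:ℝ) 1 := ⟨le_refl _, zero_le_one⟩
  have h11 : (1:ℝ) ∈ Icc (0:ℝ) 1 := ⟨zero_le_one, le_refl _⟩
  -- measurability of the distribution functions in the starting point
  have hGmeas : ∀ n r, Measurable (fun y : ℝ => Pr {ω | X y n ω ≤ r}) := by
    intro n r
    set B0 : Ω → (Fin n → V) := fun ω i => ξ i ω with hB0_def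
    have hB0 : Measurable B0 := measurable_pi_lambda _ fun i => hξ_meas i
    haveI : IsProbabilityMeasure (Pr.map B0) := Measure.isProbabilityMeasure_map hB0.aemeasurable
    have hS : MeasurableSet {p : ℝ × (Fin n → V) | iterB f n p.1 p.2 ≤ r} :=
      measurableSet_le (iterB_meas f hf_meas n) measurable_const
    have hkey : (fun y : ℝ => Pr {ω | X y n ω ≤ r})
        = fun y => (Pr.map B0) (Prod.mk y ⁻¹' {p : ℝ × (Fin n → V) | iterB f n p.1 p.2 ≤ r}) := by
      funext y
      rw [Measure.map_apply hB0 (measurable_prodMk_left hS)]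
      congr 1
      ext ω
      simp [hXB y n ω, hB0_def]
    rw [hkey]
    exact measurable_measure_prodMk_left hS
  -- the Markov property identity
  have markov : ∀ (x : ℝ) (n : ℕ) (r : ℝ),
      Pr {ω | X x (N + n) ω ≤ r}
        = ∫⁻ ω, Pr {ω' | X (X x N ω) n ω' ≤ r} ∂Pr := by
    intro x n r
    set B2 : Ω → (Fin n → V) := fun ω i => ξ (N + i) ω with hB2_def
    set B0 : Ω → (Fin n → V) := fun ω i => ξ i ω with hB0_def
    have hB2 : Measurable B2 := measurable_pi_lambda _ fun i => hξ_meas (N + i)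
    have hB0 : Measurable B0 := measurable_pi_lambda _ fun i => hξ_meas i
    have hXN : Measurable (X x N) := hXmeas x N
    haveI : IsProbabilityMeasure (Pr.map B2) := Measure.isProbabilityMeasure_map hB2.aemeasurable
    haveI : IsProbabilityMeasure (Pr.map B0) := Measure.isProbabilityMeasure_map hB0.aemeasurable
    haveI : IsProbabilityMeasure (Pr.map (X x N)) := Measure.isProbabilityMeasure_map hXN.aemeasurable
    set S : Set (ℝ × (Fin n → V)) := {p | iterB f n p.1 p.2 ≤ r} with hS_def
    have hS : MeasurableSet S := measurableSet_le (iterB_meas f hf_meas n) measurable_const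
    -- independence of X x N and the second block
    have hindep : IndepFun (X x N) B2 Pr := by
      classical
      set Sfin : Finset ℕ := Finset.range N with hSfin_def
      set Tfin : Finset ℕ := Finset.image (fun i : Fin n => N + i.val) Finset.univ with hTfin_def
      have hdisj : Disjoint Sfin Tfin := by
        rw [Finset.disjoint_left]
        intro j hjS hjT
        rw [hSfin_def, Finset.mem_range] at hjS
        rw [hTfin_def, Finset.mem_image] at hjT
        obtain ⟨i, _, rfl⟩ := hjT
        omega
      have base := hξ_indep.indepFun_finset Sfin Tfin hdisj hξ_meas
      have hSmem : ∀ i : Fin N, (i.val : ℕ) ∈ Sfin := fun i => by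
        rw [hSfin_def]; exact Finset.mem_range.mpr i.isLt
      have hTmem : ∀ i : Fin n, (N + i.val : ℕ) ∈ Tfin := fun i => by
        rw [hTfin_def]; exact Finset.mem_image.mpr ⟨i, Finset.mem_univ i, rfl⟩
      have hu : Measurable (fun w : (↥Sfin → V) =>
          iterB f N x (fun i : Fin N => w ⟨i.val, hSmem i⟩)) :=
        (iterB_meas f hf_meas N).comp
          (measurable_const.prodMk (measurable_pi_lambda _ fun i => measurable_pi_apply _))
      have hv : Measurable (fun (w : ↥Tfin → V) (i : Fin n) => w ⟨N + i.val, hTmem i⟩) :=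
        measurable_pi_lambda _ fun i => measurable_pi_apply _
      have comp := base.comp hu hv
      have e1 : ((fun w : (↥Sfin → V) =>
          iterB f N x (fun i : Fin N => w ⟨i.val, hSmem i⟩)) ∘ fun a (i : ↥Sfin) => ξ i a)
          = X x N := by
        funext ω
        rw [hXB x N ω]
        rfl
      have e2 : ((fun (w : ↥Tfin → V) (i : Fin n) => w ⟨N + i.val, hTmem i⟩)
          ∘ fun a (i : ↥Tfin) => ξ i a) = B2 := rfl
      rwa [e1, e2] at comp
    have hmap : Pr.map (fun ω => (X x N ω, B2 ω)) = (Pr.map (X x N)).prod (Pr.map B2) :=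
      (indepFun_iff_map_prod_eq_prod_map_map hXN.aemeasurable hB2.aemeasurable).mp hindep
    have hB2eqB0 : Pr.map B2 = Pr.map B0 := by
      rw [hB0_def, hB2_def, map_block_eq_pi Pr ξ hξ_meas hξ_indep hξ_ident N n,
        ← map_block_eq_pi Pr ξ hξ_meas hξ_indep hξ_ident 0 n]
      simp only [Nat.zero_add]
    have hsec : ∀ y : ℝ, (Pr.map B0) (Prod.mk y ⁻¹' S) = Pr {ω' | X y n ω' ≤ r} := by
      intro y
      rw [Measure.map_apply hB0 (measurable_prodMk_left hS)]
      congr 1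
      ext ω
      simp [hS_def, hXB y n ω, hB0_def]
    calc Pr {ω | X x (N + n) ω ≤ r}
        = Pr ((fun ω => (X x N ω, B2 ω)) ⁻¹' S) := by
          congr 1
          ext ω
          simp [hS_def, hXsh x N n ω, hB2_def]
      _ = (Pr.map (fun ω => (X x N ω, B2 ω))) S :=
          (Measure.map_apply (hXN.prodMk hB2) hS).symm
      _ = ((Pr.map (X x N)).prod (Pr.map B2)) S := by rw [hmap]
      _ = ∫⁻ y, (Pr.map B2) (Prod.mk y ⁻¹' S) ∂(Pr.map (X x N)) := Measure.prod_apply hS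
      _ = ∫⁻ y, Pr {ω' | X y n ω' ≤ r} ∂(Pr.map (X x N)) := by
          refine lintegral_congr fun y => ?_
          rw [hB2eqB0, hsec y]
      _ = ∫⁻ ω, Pr {ω' | X (X x N ω) n ω' ≤ r} ∂Pr := lintegral_map (hGmeas n r) hXN
  -- notation for epsilons
  set ε1 : ℝ := (Pr {ω | X 1 N ω ≤ c}).toReal with hε1_def
  set ε2 : ℝ := (Pr {ω | c ≤ X 0 N ω}).toReal with hε2_def
  set ε : ℝ := min ε1 ε2 with hε_def
  have htoReal_le_one : ∀ s : Set Ω, (Pr s).toReal ≤ 1 := by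
    intro s
    have := prob_le_one (μ := Pr) (s := s)
    calc (Pr s).toReal ≤ (1 : ENNReal).toReal := ENNReal.toReal_mono ENNReal.one_ne_top this
      _ = 1 := ENNReal.toReal_one
  have hε1le1 : ε1 ≤ 1 := htoReal_le_one _
  have hεnn : 0 ≤ ε := le_min ENNReal.toReal_nonneg ENNReal.toReal_nonneg
  have hεle1 : ε ≤ 1 := le_trans (min_le_left _ _) hε1le1
  -- the main induction
  have key : ∀ k : ℕ, ∀ r : ℝ,
      (Pr {ω | X 0 (k * N) ω ≤ r}).toReal - (Pr {ω | X 1 (k * N) ω ≤ r}).toReal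
        ≤ (1 - ε) ^ k := by
    intro k
    induction k with
    | zero =>
      intro r
      simp only [Nat.zero_mul, pow_zero]
      have h1 := htoReal_le_one {ω | X 0 0 ω ≤ r}
      have h2 : (0:ℝ) ≤ (Pr {ω | X 1 0 ω ≤ r}).toReal := ENNReal.toReal_nonneg
      linarith
    | succ k ih =>
      intro r
      have hkN : (k + 1) * N = N + k * N := by ring
      rw [hkN, markov 0 (k * N) r, markov 1 (k * N) r]
      set G : ℝ → ENNReal := fun y => Pr {ω' | X y (k * N) ω' ≤ r} with hG_def
      have hGle1 : ∀ y, G y ≤ 1 := fun y => prob_le_one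
      have hGmono : ∀ a, a ∈ Icc (0:ℝ) 1 → ∀ b, b ∈ Icc (0:ℝ) 1 → a ≤ b → G b ≤ G a := by
        intro a ha b hb hab
        exact measure_mono fun ω h => le_trans (hmono a ha b hb hab (k*N) ω) h
      set A1 : Set Ω := {ω | X 1 N ω ≤ c} with hA1_def
      set A2 : Set Ω := {ω | c ≤ X 0 N ω} with hA2_def
      have hA1 : MeasurableSet A1 := measurableSet_le (hXmeas 1 N) measurable_const
      have hA2 : MeasurableSet A2 := measurableSet_le measurable_const (hXmeas 0 N)
      -- upper bound for the chain started at 0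
      have hup : ∫⁻ ω, G (X 0 N ω) ∂Pr ≤ G c * Pr A2 + G 0 * Pr A2ᶜ := by
        have hpt : ∀ ω, G (X 0 N ω)
            ≤ A2.indicator (fun _ => G c) ω + A2ᶜ.indicator (fun _ => G 0) ω := by
          intro ω
          by_cases h : ω ∈ A2
          · rw [Set.indicator_of_mem h, Set.indicator_of_notMem (by simp [h]), add_zero]
            exact hGmono c hc _ (hmem 0 h01 N ω) h
          · rw [Set.indicator_of_notMem h, Set.indicator_of_mem (Set.mem_compl h), zero_add]
            exact hGmono 0 h01 _ (hmem 0 h01 N ω) (hmem 0 h01 N ω).1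
        calc ∫⁻ ω, G (X 0 N ω) ∂Pr
            ≤ ∫⁻ ω, (A2.indicator (fun _ => G c) ω + A2ᶜ.indicator (fun _ => G 0) ω) ∂Pr :=
              lintegral_mono hpt
          _ = G c * Pr A2 + G 0 * Pr A2ᶜ := by
              rw [lintegral_add_left (measurable_const.indicator hA2),
                lintegral_indicator_const hA2, lintegral_indicator_const hA2.compl]
      -- lower bound for the chain started at 1
      have hlo : G c * Pr A1 + G 1 * Pr A1ᶜ ≤ ∫⁻ ω, G (X 1 N ω) ∂Pr := by
        have hpt : ∀ ω, A1.indicator (fun _ => G c) ω + A1ᶜ.indicator (fun _ => G 1) ω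
            ≤ G (X 1 N ω) := by
          intro ω
          by_cases h : ω ∈ A1
          · rw [Set.indicator_of_mem h, Set.indicator_of_notMem (by simp [h]), add_zero]
            exact hGmono _ (hmem 1 h11 N ω) c hc h
          · rw [Set.indicator_of_notMem h, Set.indicator_of_mem (Set.mem_compl h), zero_add]
            exact hGmono _ (hmem 1 h11 N ω) 1 h11 (hmem 1 h11 N ω).2
        calc G c * Pr A1 + G 1 * Pr A1ᶜ
            = ∫⁻ ω, (A1.indicator (fun _ => G c) ω + A1ᶜ.indicator (fun _ => G 1) ω) ∂Pr := by
              rw [lintegral_add_left (measurable_const.indicator hA1),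
                lintegral_indicator_const hA1, lintegral_indicator_const hA1.compl]
          _ ≤ ∫⁻ ω, G (X 1 N ω) ∂Pr := lintegral_mono hpt
      -- pass to real numbers
      have hfin : ∀ y, G y ≠ ⊤ := fun y => (lt_of_le_of_lt (hGle1 y) ENNReal.one_lt_top).ne
      have hup_fin : G c * Pr A2 + G 0 * Pr A2ᶜ ≠ ⊤ :=
        (ENNReal.add_lt_top.mpr ⟨ENNReal.mul_lt_top (hfin c).lt_top (measure_lt_top _ _),
          ENNReal.mul_lt_top (hfin 0).lt_top (measure_lt_top _ _)⟩).ne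
      have hint1_fin : ∫⁻ ω, G (X 1 N ω) ∂Pr ≠ ⊤ := by
        refine (lt_of_le_of_lt (le_trans (lintegral_mono fun ω => hGle1 _) ?_)
          ENNReal.one_lt_top).ne
        simp
      set gc : ℝ := (G c).toReal with hgc_def
      set g0 : ℝ := (G 0).toReal with hg0_def
      set g1 : ℝ := (G 1).toReal with hg1_def
      have hcompl2 : (Pr A2ᶜ).toReal = 1 - ε2 := by
        rw [prob_compl_eq_one_sub hA2,
          ENNReal.toReal_sub_of_le prob_le_one ENNReal.one_ne_top, ENNReal.toReal_one]
      have hcompl1 : (Pr A1ᶜ).toReal = 1 - ε1 := by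
        rw [prob_compl_eq_one_sub hA1,
          ENNReal.toReal_sub_of_le prob_le_one ENNReal.one_ne_top, ENNReal.toReal_one]
      have hupR : (∫⁻ ω, G (X 0 N ω) ∂Pr).toReal ≤ gc * ε2 + g0 * (1 - ε2) := by
        have := ENNReal.toReal_mono hup_fin hup
        rwa [ENNReal.toReal_add (ENNReal.mul_lt_top (hfin c).lt_top (measure_lt_top _ _)).ne
            (ENNReal.mul_lt_top (hfin 0).lt_top (measure_lt_top _ _)).ne,
          ENNReal.toReal_mul, ENNReal.toReal_mul, hcompl2] at this
      have hloR : gc * ε1 + g1 * (1 - ε1) ≤ (∫⁻ ω, G (X 1 N ω) ∂Pr).toReal := by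
        have := ENNReal.toReal_mono hint1_fin hlo
        rwa [ENNReal.toReal_add (ENNReal.mul_lt_top (hfin c).lt_top (measure_lt_top _ _)).ne
            (ENNReal.mul_lt_top (hfin 1).lt_top (measure_lt_top _ _)).ne,
          ENNReal.toReal_mul, ENNReal.toReal_mul, hcompl1] at this
      -- ordering of g values
      have hg1c : g1 ≤ gc := ENNReal.toReal_mono (hfin c) (hGmono c hc 1 h11 hc.2)
      have hgc0 : gc ≤ g0 := ENNReal.toReal_mono (hfin 0) (hGmono 0 h01 c hc hc.1)
      have hIH : g0 - g1 ≤ (1 - ε) ^ k := ih r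
      have hεp2 : ε * (g0 - gc) ≤ ε2 * (g0 - gc) :=
        mul_le_mul_of_nonneg_right (min_le_right _ _) (by linarith)
      have hεp1 : ε * (gc - g1) ≤ ε1 * (gc - g1) :=
        mul_le_mul_of_nonneg_right (min_le_left _ _) (by linarith)
      have hfinal : (1 - ε) * (g0 - g1) ≤ (1 - ε) * (1 - ε) ^ k :=
        mul_le_mul_of_nonneg_left hIH (by linarith)
      have hεnn' : 0 ≤ ε := hεnn
      nlinarith [hupR, hloR, hεp1, hεp2, hfinal, pow_succ (1 - ε) k]
  intro k hk r
  constructor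
  · have hsub : {ω | X 1 (k * N) ω ≤ r} ⊆ {ω | X 0 (k * N) ω ≤ r} :=
      fun ω h => le_trans (hmono 0 h01 1 h11 zero_le_one (k * N) ω) h
    have := ENNReal.toReal_mono (measure_ne_top Pr _) (measure_mono hsub)
    linarith
  · exact key k r
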